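/- Main theorem (arbitrary finitely many factors): Let G_1, ..., G_k be qf-stable groups and let ∗G_s denote their free product. For every group word w(x̄, ȳ) and every r ≥ 1 there exists n (depending on w and r) bounding the m for which there exist tuples ā_1,...,ā_m and b̄_1,...,b̄_m with entries in B_r(∗G_s) such that w(ā_i, b̄_j) = 1 iff i ≤ j. -/

import Mathlib

open Monoid

set_option linter.unusedSectionVars false
set_option maxHeartbeats 1000000

/-! ### Finite Ramsey theorem for pairs -/

open Finset in
theorem preRamsey {C : Type} [Fintype C] [DecidableEq C] (h : ℕ) :
    ∃ N : ℕ, ∀ f : Fin N → Fin N → C, ∃ (v : Fin h → Fin N) (col : Fin h → C),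
      StrictMono v ∧ ∀ i j : Fin h, i < j → f (v i) (v j) = col i := by
  induction h with
  | zero => exact ⟨0, fun f => ⟨Fin.elim0, Fin.elim0, fun i => i.elim0, fun i => i.elim0⟩⟩
  | succ h ih =>
    obtain ⟨N', ihN⟩ := ih
    cases isEmpty_or_nonempty C with
    | inl hC =>
      refine ⟨1, fun f => (hC.elim (f 0 0))⟩
    | inr hC =>
      refine ⟨Fintype.card C * N' + 1, fun f => ?_⟩
      set s : Finset (Fin (Fintype.card C * N' + 1)) := univ.erase 0 with hs
      have hcard : #s = Fintype.card C * N' := by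
        simp [hs, Finset.card_erase_of_mem]
      obtain ⟨c, -, hc⟩ := Finset.exists_le_card_fiber_of_mul_le_card_of_maps_to
        (f := fun u => f 0 u) (t := (univ : Finset C)) (fun a _ => mem_univ _)
        univ_nonempty (by rw [hcard, card_univ])
      obtain ⟨T, hTsub, hTcard⟩ := Finset.exists_subset_card_eq hc
      set e := T.orderEmbOfFin hTcard with he
      have heT : ∀ i, e i ∈ T := fun i => Finset.orderEmbOfFin_mem T hTcard i
      obtain ⟨v', col', hv'mono, hv'⟩ := ihN (fun i j => f (e i) (e j))
      refine ⟨Fin.cases 0 (fun i => e (v' i)), Fin.cases c col', ?_, ?_⟩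
      · intro i j hij
        rcases Fin.eq_zero_or_eq_succ j with rfl | ⟨j', rfl⟩
        · exact absurd hij (by simp)
        rcases Fin.eq_zero_or_eq_succ i with rfl | ⟨i', rfl⟩
        · simp only [Fin.cases_zero, Fin.cases_succ]
          have : e (v' j') ∈ s := mem_of_mem_filter _ (hTsub (heT (v' j')))
          rw [hs, Finset.mem_erase] at this
          exact Fin.pos_iff_ne_zero.2 this.1
        · simp only [Fin.cases_succ]
          exact (e.strictMono.comp hv'mono) (by
            rwa [Fin.succ_lt_succ_iff] at hij)
      · intro i j hij
        rcases Fin.eq_zero_or_eq_succ j with rfl | ⟨j', rfl⟩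
        · exact absurd hij (by simp)
        rcases Fin.eq_zero_or_eq_succ i with rfl | ⟨i', rfl⟩
        · simp only [Fin.cases_zero, Fin.cases_succ]
          have := hTsub (heT (v' j'))
          simp only [Finset.mem_filter] at this
          exact this.2
        · simp only [Fin.cases_succ]
          exact hv' i' j' (by rwa [Fin.succ_lt_succ_iff] at hij)

open Finset in
theorem myRamsey {C : Type} [Fintype C] [DecidableEq C] (t : ℕ) :
    ∃ N : ℕ, ∀ f : Fin N → Fin N → C, ∃ (v : Fin t → Fin N) (c : C),
      StrictMono v ∧ ∀ i j : Fin t, i < j → f (v i) (v j) = c := by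
  obtain ⟨N, hN⟩ := preRamsey (C := C) (Fintype.card C * t + 1)
  refine ⟨N, fun f => ?_⟩
  obtain ⟨v0, col, hmono, hcol⟩ := hN f
  obtain ⟨y, hy⟩ := Fintype.exists_lt_card_fiber_of_mul_lt_card
    (f := col) (n := t) (by simp)
  obtain ⟨T, hTsub, hTcard⟩ := Finset.exists_subset_card_eq hy.le
  set e := T.orderEmbOfFin hTcard
  refine ⟨fun i => v0 (e i), y, hmono.comp e.strictMono, fun i j hij => ?_⟩
  have : col (e i) = y := by
    have := hTsub (Finset.orderEmbOfFin_mem T hTcard i)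
    simpa using this
  rw [hcol _ _ (e.strictMono hij), this]
set_option linter.unusedSectionVars false

open List

namespace FPNF

variable {ι : Type*} [DecidableEq ι] {G : ι → Type*} [∀ i, Group (G i)] {M : ℕ}

def prodList (x : Fin M → Σ i, G i) (l : List (Fin M)) : CoprodI G :=
  (l.map fun v => CoprodI.of (x v).2).prod

def prodA (x : Fin M → Σ i, G i) (A : Finset (Fin M)) : CoprodI G :=
  prodList x (A.sort (· ≤ ·))

noncomputable def tauOf (x : Fin M → Σ i, G i) (A : Finset (Fin M)) : Bool :=
  @decide ((∀ u ∈ A, ∀ u' ∈ A, (x u).1 = (x u').1) ∧ prodA x A = 1)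
    (Classical.propDecidable _)

def step (σ : Fin M → ι) (τ : Finset (Fin M) → Bool) (v : Fin M)
    (st : List (ι × Finset (Fin M))) : List (ι × Finset (Fin M)) :=
  if τ {v} then st
  else match st with
  | [] => [(σ v, {v})]
  | (s, A) :: rest =>
    if σ v = s then (if τ (insert v A) then rest else (s, insert v A) :: rest)
    else (σ v, {v}) :: (s, A) :: rest

lemma step_skip {σ : Fin M → ι} {τ : Finset (Fin M) → Bool} {v : Fin M}
    {st : List (ι × Finset (Fin M))} (h : τ {v} = true) : step σ τ v st = st := by
  simp [step, h]

lemma step_nil {σ : Fin M → ι} {τ : Finset (Fin M) → Bool} {v : Fin M}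
    (h : τ {v} = false) : step σ τ v [] = [(σ v, {v})] := by
  simp [step, h]

lemma step_cons {σ : Fin M → ι} {τ : Finset (Fin M) → Bool} {v : Fin M}
    {s : ι} {A : Finset (Fin M)} {rest : List (ι × Finset (Fin M))}
    (h : τ {v} = false) : step σ τ v ((s, A) :: rest) =
      if σ v = s then (if τ (insert v A) then rest else (s, insert v A) :: rest)
      else (σ v, {v}) :: (s, A) :: rest := by
  simp [step, h]

def run (σ : Fin M → ι) (τ : Finset (Fin M) → Bool) (l : List (Fin M)) :
    List (ι × Finset (Fin M)) := l.foldr (step σ τ) []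

def wordprod (x : Fin M → Σ i, G i) (st : List (ι × Finset (Fin M))) : CoprodI G :=
  (st.map fun P => prodA x P.2).prod

def gv (x : Fin M → Σ i, G i) (s : ι) (l : List (Fin M)) : G s :=
  (l.map fun v => if h : (x v).1 = s then h ▸ (x v).2 else 1).prod

lemma of_cast {i s : ι} (h : i = s) (g : G i) :
    CoprodI.of (h ▸ g : G s) = CoprodI.of g := by subst h; rfl

lemma of_gv (x : Fin M → Σ i, G i) (s : ι) (l : List (Fin M))
    (hl : ∀ u ∈ l, (x u).1 = s) : CoprodI.of (gv x s l) = prodList x l := by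
  induction l with
  | nil => simp [gv, prodList]
  | cons v l ih =>
    have hv : (x v).1 = s := hl v (mem_cons_self)
    simp only [gv, prodList, List.map_cons, List.prod_cons, map_mul] at *
    rw [dif_pos hv, of_cast hv, ih (fun u hu => hl u (mem_cons_of_mem _ hu))]

lemma word_ne_one (L : List (Σ i, G i)) (h1 : ∀ p ∈ L, p.2 ≠ 1)
    (h2 : L.Chain' (fun p q => p.1 ≠ q.1)) (hne : L ≠ []) :
    (L.map fun p => CoprodI.of p.2).prod ≠ 1 := by
  classical
  intro hprod
  have hWprod : (CoprodI.Word.prod (M := G) ⟨L, h1, h2⟩) = 1 := hprod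
  have : (⟨L, h1, h2⟩ : CoprodI.Word G) = CoprodI.Word.empty := by
    apply (CoprodI.Word.equiv (M := G)).symm.injective
    show CoprodI.Word.prod _ = CoprodI.Word.prod CoprodI.Word.empty
    rw [hWprod, CoprodI.Word.prod_empty]
  exact hne (congrArg CoprodI.Word.toList this)

structure Inv (x : Fin M → Σ i, G i) (σ : Fin M → ι) (l : List (Fin M))
    (st : List (ι × Finset (Fin M))) : Prop where
  mem : ∀ P ∈ st, ∀ u ∈ P.2, u ∈ l
  nonempty : ∀ P ∈ st, (P.2 : Finset (Fin M)).Nonempty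
  const : ∀ P ∈ st, ∀ u ∈ P.2, σ u = P.1
  prodne : ∀ P ∈ st, prodA x P.2 ≠ 1
  chain : st.Chain' (fun P Q => P.1 ≠ Q.1)
  prodEq : prodList x l = wordprod x st

lemma prodA_singleton (x : Fin M → Σ i, G i) (v : Fin M) :
    prodA x {v} = CoprodI.of (x v).2 := by
  simp [prodA, prodList, Finset.sort_singleton]

lemma tau_iff (x : Fin M → Σ i, G i) {A : Finset (Fin M)}
    (hA : ∀ u ∈ A, ∀ u' ∈ A, (x u).1 = (x u').1) :
    tauOf x A = true ↔ prodA x A = 1 := by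
  simp only [tauOf, decide_eq_true_eq]
  exact ⟨fun h => h.2, fun h => ⟨hA, h⟩⟩

lemma tau_eq_false (x : Fin M → Σ i, G i) {A : Finset (Fin M)}
    (h : ¬((∀ u ∈ A, ∀ u' ∈ A, (x u).1 = (x u').1) ∧ prodA x A = 1)) :
    tauOf x A = false := by
  cases h' : tauOf x A with
  | false => rfl
  | true => exact absurd (@of_decide_eq_true _ (Classical.propDecidable _) h') h

lemma tau_singleton (x : Fin M → Σ i, G i) (v : Fin M) :
    tauOf x {v} = true ↔ CoprodI.of (x v).2 = 1 := by
  rw [tau_iff, prodA_singleton]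
  intro u hu u' hu'
  simp only [Finset.mem_singleton] at hu hu'
  rw [hu, hu']

lemma prodA_insert (x : Fin M → Σ i, G i) {A : Finset (Fin M)} {v : Fin M}
    (hA : ∀ u ∈ A, v < u) :
    prodA x (insert v A) = CoprodI.of (x v).2 * prodA x A := by
  have hvA : v ∉ A := fun h => lt_irrefl v (hA v h)
  rw [prodA, Finset.sort_insert (· ≤ ·) (fun b hb => (hA b hb).le) hvA]
  simp [prodList, prodA]

lemma prodList_cons (x : Fin M → Σ i, G i) (v : Fin M) (l : List (Fin M)) :
    prodList x (v :: l) = CoprodI.of (x v).2 * prodList x l := by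
  simp [prodList]

lemma wordprod_cons (x : Fin M → Σ i, G i) (P : ι × Finset (Fin M))
    (rest : List (ι × Finset (Fin M))) :
    wordprod x (P :: rest) = prodA x P.2 * wordprod x rest := by
  simp [wordprod]

lemma inv_step (x : Fin M → Σ i, G i) (σ : Fin M → ι) (hx : ∀ v, (x v).1 = σ v)
    {l : List (Fin M)} {st : List (ι × Finset (Fin M))} {v : Fin M}
    (hinv : Inv x σ l st) (hvl : ∀ u ∈ l, v < u) :
    Inv x σ (v :: l) (step σ (tauOf x) v st) := by
  by_cases hτv : tauOf x {v} = true
  · -- the letter is trivial; nothing changes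
    have h1 : CoprodI.of (x v).2 = 1 := (tau_singleton x v).1 hτv
    rw [step_skip hτv]
    refine ⟨fun P hP u hu => mem_cons_of_mem _ (hinv.mem P hP u hu), hinv.nonempty,
      hinv.const, hinv.prodne, hinv.chain, ?_⟩
    rw [prodList_cons, h1, one_mul, hinv.prodEq]
  · rw [Bool.not_eq_true] at hτv
    have hv1 : CoprodI.of (x v).2 ≠ 1 := fun h => by
      rw [(tau_singleton x v).2 h] at hτv; simp at hτv
    match st, hinv with
    | [], hinv =>
      rw [step_nil hτv]
      refine ⟨?_, ?_, ?_, ?_, ?_, ?_⟩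
      · intro P hP u hu
        rw [List.mem_singleton] at hP; subst hP
        simp only [Finset.mem_singleton] at hu
        simp [hu]
      · intro P hP
        rw [List.mem_singleton] at hP; subst hP
        exact ⟨v, Finset.mem_singleton_self v⟩
      · intro P hP u hu
        rw [List.mem_singleton] at hP; subst hP
        simp only [Finset.mem_singleton] at hu
        simp [hu]
      · intro P hP
        rw [List.mem_singleton] at hP; subst hP
        rw [prodA_singleton]; exact hv1
      · exact List.isChain_singleton _
      · rw [prodList_cons, hinv.prodEq, wordprod_cons]
        have h0 : wordprod x ([] : List (ι × Finset (Fin M))) = 1 := by simp [wordprod]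
        rw [h0, prodA_singleton, mul_one]
    | (s, A) :: rest, hinv =>
      rw [step_cons hτv]
      have hAl : ∀ u ∈ A, u ∈ l := hinv.mem (s, A) (mem_cons_self)
      have hAv : ∀ u ∈ A, v < u := fun u hu => hvl u (hAl u hu)
      have hAconst : ∀ u ∈ A, σ u = s := hinv.const (s, A) (mem_cons_self)
      have htailmem : ∀ P ∈ rest, ∀ u ∈ P.2, u ∈ l := fun P hP => hinv.mem P (mem_cons_of_mem _ hP)
      have htailne : ∀ P ∈ rest, (P.2 : Finset (Fin M)).Nonempty := fun P hP => hinv.nonempty P (mem_cons_of_mem _ hP)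
      have htailconst : ∀ P ∈ rest, ∀ u ∈ P.2, σ u = P.1 := fun P hP => hinv.const P (mem_cons_of_mem _ hP)
      have htailprodne : ∀ P ∈ rest, prodA x P.2 ≠ 1 := fun P hP => hinv.prodne P (mem_cons_of_mem _ hP)
      have htailchain : rest.Chain' (fun P Q => P.1 ≠ Q.1) := hinv.chain.tail
      by_cases hσv : σ v = s
      · rw [if_pos hσv]
        have hconstins : ∀ u ∈ insert v A, ∀ u' ∈ insert v A, (x u).1 = (x u').1 := by
          intro u hu u' hu'
          rw [Finset.mem_insert] at hu hu'
          have fu : (x u).1 = s := by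
            rcases hu with rfl | hu
            · rw [hx u, hσv]
            · rw [hx u, hAconst u hu]
          have fu' : (x u').1 = s := by
            rcases hu' with rfl | hu'
            · rw [hx u', hσv]
            · rw [hx u', hAconst u' hu']
          rw [fu, fu']
        by_cases hτins : tauOf x (insert v A) = true
        · rw [if_pos hτins]
          have hins1 : prodA x (insert v A) = 1 := (tau_iff x hconstins).1 hτins
          refine ⟨fun P hP u hu => mem_cons_of_mem _ (htailmem P hP u hu),
            htailne, htailconst, htailprodne, htailchain, ?_⟩
          rw [prodList_cons, hinv.prodEq, wordprod_cons]
          have : CoprodI.of (x v).2 * prodA x A = prodA x (insert v A) :=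
            (prodA_insert x hAv).symm
          rw [← mul_assoc, this, hins1, one_mul]
        · rw [if_neg hτins]
          rw [Bool.not_eq_true] at hτins
          have hinsne : prodA x (insert v A) ≠ 1 := fun h => by
            rw [(tau_iff x hconstins).2 h] at hτins
            simp at hτins
          refine ⟨?_, ?_, ?_, ?_, ?_, ?_⟩
          · intro P hP u hu
            rcases List.mem_cons.1 hP with rfl | hP
            · simp only [Finset.mem_insert] at hu
              rcases hu with rfl | hu
              · exact mem_cons_self
              · exact mem_cons_of_mem _ (hAl u hu)
            · exact mem_cons_of_mem _ (htailmem P hP u hu)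
          · intro P hP
            rcases List.mem_cons.1 hP with rfl | hP
            · exact ⟨v, Finset.mem_insert_self _ _⟩
            · exact htailne P hP
          · intro P hP u hu
            rcases List.mem_cons.1 hP with rfl | hP
            · simp only [Finset.mem_insert] at hu
              rcases hu with rfl | hu
              · exact hσv
              · exact hAconst u hu
            · exact htailconst P hP u hu
          · intro P hP
            rcases List.mem_cons.1 hP with rfl | hP
            · exact hinsne
            · exact htailprodne P hP
          · have := hinv.chain
            rcases rest with _ | ⟨Q, rest'⟩
            · exact List.isChain_singleton _
            · simp only [List.Chain', List.isChain_cons_cons] at this ⊢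
              exact ⟨this.1, this.2⟩
          · rw [prodList_cons, hinv.prodEq, wordprod_cons, wordprod_cons,
              prodA_insert x hAv, mul_assoc]
      · rw [if_neg hσv]
        refine ⟨?_, ?_, ?_, ?_, ?_, ?_⟩
        · intro P hP u hu
          rcases List.mem_cons.1 hP with rfl | hP
          · simp only [Finset.mem_singleton] at hu
            simp [hu]
          · exact mem_cons_of_mem _ (hinv.mem P hP u hu)
        · intro P hP
          rcases List.mem_cons.1 hP with rfl | hP
          · exact ⟨v, Finset.mem_singleton_self v⟩
          · exact hinv.nonempty P hP
        · intro P hP u hu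
          rcases List.mem_cons.1 hP with rfl | hP
          · simp only [Finset.mem_singleton] at hu
            simp [hu]
          · exact hinv.const P hP u hu
        · intro P hP
          rcases List.mem_cons.1 hP with rfl | hP
          · rw [prodA_singleton]; exact hv1
          · exact hinv.prodne P hP
        · simp only [List.Chain', List.isChain_cons_cons]
          exact ⟨hσv, hinv.chain⟩
        · rw [prodList_cons, hinv.prodEq,
            wordprod_cons x (σ v, {v}) ((s, A) :: rest), prodA_singleton]

lemma inv_run (x : Fin M → Σ i, G i) (σ : Fin M → ι) (hx : ∀ v, (x v).1 = σ v) :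
    ∀ l : List (Fin M), l.Pairwise (· < ·) → Inv x σ l (run σ (tauOf x) l) := by
  intro l hl
  induction l with
  | nil =>
    refine ⟨?_, ?_, ?_, ?_, ?_, ?_⟩ <;> simp [run, prodList, wordprod, List.Chain']
  | cons v l ih =>
    rw [List.pairwise_cons] at hl
    have : run σ (tauOf x) (v :: l) = step σ (tauOf x) v (run σ (tauOf x) l) := rfl
    rw [this]
    exact inv_step x σ hx (ih hl.2) hl.1

theorem core (x : Fin M → Σ i, G i) (σ : Fin M → ι) (hx : ∀ v, (x v).1 = σ v) :
    prodList x (List.finRange M) = 1 ↔ run σ (tauOf x) (List.finRange M) = [] := by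
  have hinv := inv_run x σ hx (List.finRange M) (List.pairwise_lt_finRange M)
  set st := run σ (tauOf x) (List.finRange M) with hst
  constructor
  · intro h1
    by_contra hne
    apply word_ne_one (st.map fun P => ⟨P.1, gv x P.1 (P.2.sort (· ≤ ·))⟩)
      ?_ ?_ ?_ ?_
    · intro p hp
      rw [List.mem_map] at hp
      obtain ⟨P, hP, rfl⟩ := hp
      intro hone
      apply hinv.prodne P hP
      have hthis : CoprodI.of (gv x P.1 (P.2.sort (· ≤ ·))) = prodA x P.2 :=
        of_gv x P.1 _ (fun u hu => by
          rw [hx u]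
          exact hinv.const P hP u (Finset.mem_sort (α := Fin M) (· ≤ ·) |>.1 hu))
      have hone' : gv x P.1 (P.2.sort (· ≤ ·)) = 1 := hone
      rw [← hthis, hone', map_one]
    · simp only [List.Chain', List.isChain_map]
      exact hinv.chain.imp (fun {P Q} h => h)
    · simpa using hne
    · rw [List.map_map]
      have : ((fun p : Σ i, G i => CoprodI.of p.2) ∘
          fun P : ι × Finset (Fin M) => (⟨P.1, gv x P.1 (P.2.sort (· ≤ ·))⟩ : Σ i, G i)) =
          fun P : ι × Finset (Fin M) => CoprodI.of (gv x P.1 (P.2.sort (· ≤ ·))) := rfl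
      rw [this]
      have heach : ∀ P ∈ st, CoprodI.of (gv x P.1 (P.2.sort (· ≤ ·))) = prodA x P.2 := by
        intro P hP
        exact of_gv x P.1 _ (fun u hu => by
          rw [hx u]
          exact hinv.const P hP u (Finset.mem_sort (α := Fin M) (· ≤ ·) |>.1 hu))
      rw [List.map_congr_left heach]
      rw [← wordprod, ← hinv.prodEq, h1]
  · intro h
    rw [hinv.prodEq, h]
    simp [wordprod]

end FPNF

/-! ### List gluing helpers -/
namespace FPGlue

variable {α β : Type*}

lemma length_flatMap_const (f : β → List α) (r : ℕ) (hf : ∀ b, (f b).length = r) :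
    ∀ l : List β, (l.flatMap f).length = l.length * r := by
  intro l
  induction l with
  | nil => simp
  | cons b l ih =>
    rw [List.flatMap_cons, List.length_append, ih, hf, List.length_cons]
    ring

lemma getElem_flatMap_const (f : β → List α) (r : ℕ) (hr : 0 < r)
    (hf : ∀ b, (f b).length = r) :
    ∀ (l : List β) (v : ℕ) (hv : v < l.length * r),
      (l.flatMap f)[v]'(by rw [length_flatMap_const f r hf]; exact hv) =
      (f (l[v / r]'(Nat.div_lt_of_lt_mul (by rwa [mul_comm]))))[v % r]'(by
        rw [hf]; exact Nat.mod_lt _ hr) := by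
  intro l
  induction l with
  | nil => intro v hv; simp at hv
  | cons b l ih =>
    intro v hv
    by_cases h : v < r
    · have h1 : v < (f b).length := by rw [hf]; exact h
      have hd : v / r = 0 := Nat.div_eq_of_lt h
      have hm : v % r = v := Nat.mod_eq_of_lt h
      simp only [List.flatMap_cons, List.getElem_append_left h1, hd, hm,
        List.getElem_cons_zero]
    · push_neg at h
      have h1 : (f b).length ≤ v := by rw [hf]; exact h
      have hv' : v - r < l.length * r := by
        rw [List.length_cons, Nat.succ_mul] at hv
        omega
      have hd : v / r = (v - r) / r + 1 := by
        rw [Nat.div_eq_sub_div hr h]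
      have hm : v % r = (v - r) % r := Nat.mod_eq_sub_mod h
      have hlen : v - (f b).length = v - r := by rw [hf]
      simp only [List.flatMap_cons, List.getElem_append_right h1, hd, hm, hlen,
        List.getElem_cons_succ]
      exact ih (v - r) hv'

lemma ofFn_get_cast {l : List α} {n : ℕ} (h : n = l.length) :
    List.ofFn (fun i : Fin n => l.get (Fin.cast h i)) = l := by
  subst h
  exact List.ofFn_get l

lemma map_get_cast {l : List α} {n : ℕ} (h : n = l.length) (g : α → β) :
    ((List.finRange n).map (fun v => g (l.get (Fin.cast h v)))) = l.map g := by
  subst h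
  rw [show (fun v => g (l.get (Fin.cast rfl v))) = g ∘ l.get from rfl, ← List.map_map,
    List.map_get_finRange]

lemma prod_flatMap_map {M : Type*} [Monoid M] (g : α → M) (f : β → List α) (l : List β) :
    ((l.flatMap f).map g).prod = (l.map (fun b => ((f b).map g).prod)).prod := by
  induction l with
  | nil => simp
  | cons b l ih => rw [List.flatMap_cons, List.map_append, List.prod_append, ih, List.map_cons,
      List.prod_cons]

end FPGlue

/-! ### Gluing: words in the free product as slot arrays -/
namespace MainGlue

open FPNF FPGlue

variable {ι : Type*} [DecidableEq ι] {G : ι → Type*} [∀ i, Group (G i)]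
variable {p q r : ℕ} (wl : List ((Fin p ⊕ Fin q) × Bool))

def sigInv (x : Σ s, G s) : Σ s, G s := ⟨x.1, x.2⁻¹⟩

variable (fA : Fin p → Fin r → Σ s, G s) (fB : Fin q → Fin r → Σ s, G s)

def blockOf (zb : (Fin p ⊕ Fin q) × Bool) : List (Σ s, G s) :=
  if zb.2 then List.ofFn (Sum.elim fA fB zb.1)
  else (List.ofFn (fun u => sigInv (Sum.elim fA fB zb.1 u))).reverse

lemma length_blockOf (zb : (Fin p ⊕ Fin q) × Bool) : (blockOf fA fB zb).length = r := by
  unfold blockOf; split <;> simp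

def Xlist : List (Σ s, G s) := wl.flatMap (blockOf fA fB)

lemma length_Xlist : (Xlist wl fA fB).length = wl.length * r :=
  length_flatMap_const _ r (length_blockOf fA fB) wl

def xArr : Fin (wl.length * r) → Σ s, G s := fun v =>
  (Xlist wl fA fB).get (Fin.cast (length_Xlist wl fA fB).symm v)

lemma prodList_xArr :
    prodList (xArr wl fA fB) (List.finRange (wl.length * r)) =
      ((Xlist wl fA fB).map fun s => CoprodI.of s.2).prod := by
  unfold prodList xArr
  rw [map_get_cast (length_Xlist wl fA fB).symm (fun y => CoprodI.of y.2)]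

lemma prod_Xlist (a : Fin p → CoprodI G) (b : Fin q → CoprodI G)
    (ha : ∀ t, a t = (List.ofFn fun u => CoprodI.of (fA t u).2).prod)
    (hb : ∀ t, b t = (List.ofFn fun u => CoprodI.of (fB t u).2).prod) :
    ((Xlist wl fA fB).map fun s => CoprodI.of s.2).prod =
      (wl.map fun zb => cond zb.2 (Sum.elim a b zb.1) (Sum.elim a b zb.1)⁻¹).prod := by
  unfold Xlist
  rw [prod_flatMap_map]
  congr 1
  apply List.map_congr_left
  intro zb _
  have helim : Sum.elim a b zb.1 = (List.ofFn fun u => CoprodI.of (Sum.elim fA fB zb.1 u).2).prod := by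
    cases h : zb.1 with
    | inl t => exact ha t
    | inr t => exact hb t
  unfold blockOf
  rcases zb with ⟨z, bb⟩
  cases bb
  · simp only [cond_false]
    rw [if_neg (by simp : ¬ (((z, false) : (Fin p ⊕ Fin q) × Bool).2 = true))]
    rw [helim, List.prod_inv_reverse, List.map_reverse, List.map_ofFn, List.map_ofFn]
    simp only [Function.comp_def]
    have hfun : (fun u => CoprodI.of (sigInv (G := G) (Sum.elim fA fB (z, false).1 u)).snd)
        = (fun u => (CoprodI.of (Sum.elim fA fB ((z, false) : (Fin p ⊕ Fin q) × Bool).1 u).snd)⁻¹) := by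
      funext u; simp [sigInv]; exact map_inv CoprodI.of _
    rw [hfun]
  · simp only [cond_true]
    rw [if_pos trivial, helim, List.map_ofFn]
    simp [Function.comp_def]

def cIdx (v : Fin (wl.length * r)) (hr : 0 < r) : Fin wl.length :=
  ⟨v.1 / r, Nat.div_lt_of_lt_mul (lt_of_lt_of_eq v.2 (Nat.mul_comm _ _))⟩

def uIdx' (v : Fin (wl.length * r)) (hr : 0 < r) : Fin r :=
  if (wl.get (cIdx wl v hr)).2 then ⟨v.1 % r, Nat.mod_lt _ hr⟩
  else ⟨r - 1 - v.1 % r, by have := Nat.mod_lt v.1 hr; omega⟩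

lemma xArr_eq (hr : 0 < r) (v : Fin (wl.length * r)) :
    xArr wl fA fB v =
      cond (wl.get (cIdx wl v hr)).2
        (Sum.elim fA fB (wl.get (cIdx wl v hr)).1 (uIdx' wl v hr))
        (sigInv (Sum.elim fA fB (wl.get (cIdx wl v hr)).1 (uIdx' wl v hr))) := by
  have hx : xArr wl fA fB v = (wl.flatMap (blockOf fA fB))[(v : ℕ)]'(by
      rw [length_flatMap_const _ r (length_blockOf fA fB)]; exact v.2) := rfl
  have hv : (v : ℕ) < wl.length * r := v.2
  rw [hx, getElem_flatMap_const (blockOf fA fB) r hr (length_blockOf fA fB) wl v.1 hv]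
  rcases hzb : wl.get (cIdx wl v hr) with ⟨z, bb⟩
  have hblock : blockOf fA fB (wl[(v : ℕ) / r]'(Nat.div_lt_of_lt_mul
        (lt_of_lt_of_eq hv (Nat.mul_comm _ _))))
      = blockOf fA fB (z, bb) := by
    rw [show (wl[(v : ℕ) / r]'(Nat.div_lt_of_lt_mul (lt_of_lt_of_eq hv (Nat.mul_comm _ _))))
      = wl.get (cIdx wl v hr) from rfl, hzb]
  rw [List.getElem_of_eq hblock]
  cases bb
  · simp only [cond_false]
    have hb2 : blockOf fA fB ((z, false) : (Fin p ⊕ Fin q) × Bool)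
        = (List.ofFn fun u => sigInv (Sum.elim fA fB z u)).reverse := by
      unfold blockOf; simp
    rw [List.getElem_of_eq hb2]
    rw [List.getElem_reverse, List.getElem_ofFn]
    simp only [uIdx', hzb, if_neg (by simp : ¬ (false = true))]
    congr 1
    simp [Fin.ext_iff]
  · simp only [cond_true]
    have hb2 : blockOf fA fB ((z, true) : (Fin p ⊕ Fin q) × Bool)
        = List.ofFn (Sum.elim fA fB z) := by
      unfold blockOf; simp
    rw [List.getElem_of_eq hb2]
    rw [List.getElem_ofFn]
    simp only [uIdx', hzb, if_pos rfl]
    rw [if_pos trivial]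

def varOf (hr : 0 < r) (v : Fin (wl.length * r)) : Fin (p * r) ⊕ Fin (q * r) :=
  Sum.map (fun t => finProdFinEquiv (t, uIdx' wl v hr))
    (fun t' => finProdFinEquiv (t', uIdx' wl v hr)) (wl.get (cIdx wl v hr)).1

def termOf (hr : 0 < r) (v : Fin (wl.length * r)) : FreeGroup (Fin (p * r) ⊕ Fin (q * r)) :=
  cond (wl.get (cIdx wl v hr)).2 (FreeGroup.of (varOf wl hr v)) (FreeGroup.of (varOf wl hr v))⁻¹

def wordW (hr : 0 < r) (A : Finset (Fin (wl.length * r))) :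
    FreeGroup (Fin (p * r) ⊕ Fin (q * r)) :=
  ((A.sort (· ≤ ·)).map (termOf wl hr)).prod

def aTup (s : ι) : Fin (p * r) → G s := fun d =>
  if h : (fA (finProdFinEquiv.symm d).1 (finProdFinEquiv.symm d).2).1 = s
  then h ▸ (fA (finProdFinEquiv.symm d).1 (finProdFinEquiv.symm d).2).2 else 1

def bTup (s : ι) : Fin (q * r) → G s := fun d =>
  if h : (fB (finProdFinEquiv.symm d).1 (finProdFinEquiv.symm d).2).1 = s
  then h ▸ (fB (finProdFinEquiv.symm d).1 (finProdFinEquiv.symm d).2).2 else 1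

lemma cast_inv {i s : ι} (h : i = s) (g : G i) : h ▸ (g⁻¹) = (h ▸ g : G s)⁻¹ := by
  subst h; rfl

lemma lift_wordW (hr : 0 < r) (s : ι) (A : Finset (Fin (wl.length * r))) :
    FreeGroup.lift (Sum.elim (aTup fA s) (bTup fB s)) (wordW wl hr A) =
      gv (xArr wl fA fB) s (A.sort (· ≤ ·)) := by
  unfold wordW gv
  rw [map_list_prod ((FreeGroup.lift (Sum.elim (aTup fA s) (bTup fB s)))), List.map_map]
  congr 1
  apply List.map_congr_left
  intro v _
  show FreeGroup.lift _ (termOf wl hr v) = _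
  rw [xArr_eq wl fA fB hr v]
  unfold termOf varOf
  rcases hzb : wl.get (cIdx wl v hr) with ⟨z, bb⟩
  cases bb
  · simp only [cond_false, map_inv, FreeGroup.lift_apply_of]
    cases z with
    | inl t =>
      simp only [Sum.map_inl, Sum.elim_inl, sigInv]
      rw [show aTup fA s (finProdFinEquiv (t, uIdx' wl v hr)) =
        (if h : (fA t (uIdx' wl v hr)).1 = s
         then h ▸ (fA t (uIdx' wl v hr)).2 else 1) from by
          unfold aTup; rw [Equiv.symm_apply_apply]]
      split
      · rename_i h
        rw [← cast_inv h]; exact (dif_pos h).symm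
      · rw [inv_one]; exact (dif_neg (e := fun _ => (1 : G s)) ‹_›).symm
    | inr t =>
      simp only [Sum.map_inr, Sum.elim_inr, sigInv]
      rw [show bTup fB s (finProdFinEquiv (t, uIdx' wl v hr)) =
        (if h : (fB t (uIdx' wl v hr)).1 = s
         then h ▸ (fB t (uIdx' wl v hr)).2 else 1) from by
          unfold bTup; rw [Equiv.symm_apply_apply]]
      split
      · rename_i h
        rw [← cast_inv h]; exact (dif_pos h).symm
      · rw [inv_one]; exact (dif_neg (e := fun _ => (1 : G s)) ‹_›).symm
  · simp only [cond_true, FreeGroup.lift_apply_of]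
    cases z with
    | inl t =>
      simp only [Sum.map_inl, Sum.elim_inl]
      unfold aTup; rw [Equiv.symm_apply_apply]; rfl
    | inr t =>
      simp only [Sum.map_inr, Sum.elim_inr]
      unfold bTup; rw [Equiv.symm_apply_apply]; rfl

end MainGlue

/-! ### Statement definitions -/

/-- A group `G` is qf-stable if every group-word equation `w(x̄, ȳ) = 1` defines a
stable relation on tuples from `G`. -/
def QFStable (G : Type*) [Group G] : Prop :=
  ∀ (p q : ℕ) (w : FreeGroup (Fin p ⊕ Fin q)), ∃ n : ℕ, ∀ m : ℕ,
    (∃ (a : Fin m → Fin p → G) (b : Fin m → Fin q → G),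
      ∀ i j, FreeGroup.lift (Sum.elim (a i) (b j)) w = 1 ↔ i ≤ j) → m ≤ n

/-- The ball of radius `r` in the free product `∗ Gₛ` of the family `Gₛ`: elements
whose normal form has length at most `r`, equivalently products of at most `r`
letters, each letter coming from one of the factors. -/
def coprodIBall {ι : Type*} (G : ι → Type*) [∀ s, Group (G s)] (r : ℕ) :
    Set (CoprodI G) :=
  {x | ∃ l : List (CoprodI G), l.length ≤ r ∧
    (∀ y ∈ l, ∃ (s : ι) (g : G s), y = CoprodI.of g) ∧ x = l.prod}

/-! ### Extracting letters from ball elements -/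

lemma exists_sigma_list {ι : Type*} {G : ι → Type*} [∀ s, Group (G s)] :
    ∀ (l : List (CoprodI G)), (∀ y ∈ l, ∃ (s : ι) (g : G s), y = CoprodI.of g) →
      ∃ Lp : List (Σ s, G s), l = Lp.map (fun p => CoprodI.of p.2) := by
  intro l
  induction l with
  | nil => exact fun _ => ⟨[], rfl⟩
  | cons y l ih =>
    intro h
    obtain ⟨s, g, rfl⟩ := h y (List.mem_cons_self)
    obtain ⟨Lp, rfl⟩ := ih (fun z hz => h z (List.mem_cons_of_mem _ hz))
    exact ⟨⟨s, g⟩ :: Lp, rfl⟩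

lemma exists_letters {ι : Type*} {G : ι → Type*} [∀ s, Group (G s)] {r : ℕ}
    {x : CoprodI G} (s₀ : ι) (hx : x ∈ coprodIBall G r) :
    ∃ f : Fin r → Σ s, G s, x = (List.ofFn fun u => CoprodI.of (f u).2).prod := by
  obtain ⟨l, hlen, hlet, rfl⟩ := hx
  obtain ⟨Lp, rfl⟩ := exists_sigma_list l hlet
  set pad : List (Σ s, G s) := Lp ++ List.replicate (r - Lp.length) ⟨s₀, 1⟩ with hpad
  have hplen : r = pad.length := by
    rw [hpad, List.length_append, List.length_replicate]
    rw [List.length_map] at hlen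
    omega
  refine ⟨fun u => pad.get (Fin.cast hplen u), ?_⟩
  have h1 : (List.ofFn fun u : Fin r =>
      CoprodI.of ((pad.get (Fin.cast hplen u)).2)) = pad.map fun p => CoprodI.of p.2 := by
    have := FPGlue.map_get_cast (l := pad) hplen (fun p : Σ s, G s => CoprodI.of p.2)
    rw [← this, List.ofFn_eq_map]
  rw [h1, hpad, List.map_append, List.prod_append, List.map_replicate]
  simp

/-! ### Main theorem -/

/-- **Main theorem (arbitrary finitely many factors).** Let `G_1, ..., G_k` be
qf-stable groups and `∗ Gₛ` their free product. For every group word `w(x̄, ȳ)` and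
every `r ≥ 1` there exists `n` (depending on `w` and `r`) bounding the `m` for which
there exist tuples `ā_1, ..., ā_m` and `b̄_1, ..., b̄_m` with entries in
`B_r(∗ Gₛ)` such that `w(ā_i, b̄_j) = 1` iff `i ≤ j`. -/
theorem main_theorem_many_factors (k : ℕ) (G : Fin k → Type*) [∀ s, Group (G s)]
    (hG : ∀ s, QFStable (G s))
    (p q : ℕ) (w : FreeGroup (Fin p ⊕ Fin q)) (r : ℕ) (hr : 1 ≤ r) :
    ∃ n : ℕ, ∀ m : ℕ,
      (∃ (a : Fin m → Fin p → CoprodI G) (b : Fin m → Fin q → CoprodI G),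
        (∀ i t, a i t ∈ coprodIBall G r) ∧ (∀ j t, b j t ∈ coprodIBall G r) ∧
        ∀ i j, FreeGroup.lift (Sum.elim (a i) (b j)) w = 1 ↔ i ≤ j) → m ≤ n := by
  classical
  rcases Nat.eq_zero_or_pos k with hk | hk
  · -- trivial case: no factors, the free product is trivial
    subst hk
    refine ⟨1, fun m hm => ?_⟩
    by_contra hle
    push_neg at hle
    obtain ⟨a, b, -, -, hlad⟩ := hm
    have htriv : ∀ x : CoprodI G, x = 1 := by
      intro x
      induction x using Monoid.CoprodI.induction_on with
      | one => rfl
      | of i g => exact i.elim0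
      | mul x y hx hy => rw [hx, hy, one_mul]
    have h10 := (hlad ⟨1, hle⟩ ⟨0, by omega⟩).1 (htriv _)
    simp [Fin.le_def] at h10
  · -- main case
    have hr0 : 0 < r := hr
    set wl := w.toWord with hwl
    set M₀ := wl.length * r with hM₀
    -- the bound from qf-stability of the factors, over all possible atoms
    set nOf : Fin k × Finset (Fin M₀) → ℕ := fun sA =>
      Classical.choose (hG sA.1 (p * r) (q * r) (MainGlue.wordW wl hr0 sA.2)) with hnOf
    set B : ℕ := Finset.univ.sup nOf with hB
    obtain ⟨Rt, hRt⟩ := myRamsey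
      (C := (Finset (Fin M₀) → Bool) × (Finset (Fin M₀) → Bool)) (2 * B + 4)
    set K := Fintype.card ((Fin p → Fin r → Fin k) × (Fin q → Fin r → Fin k)) with hK
    refine ⟨K * Rt + 1, fun m hm => ?_⟩
    by_contra hmle
    push_neg at hmle
    obtain ⟨a, b, hA, hB2, hlad⟩ := hm
    -- extract letters
    choose fA hfA using fun (i : Fin m) (t : Fin p) => exists_letters ⟨0, hk⟩ (hA i t)
    choose fB hfB using fun (j : Fin m) (t : Fin q) => exists_letters ⟨0, hk⟩ (hB2 j t)
    -- pigeonhole on letter patterns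
    obtain ⟨y, hy⟩ := Fintype.exists_lt_card_fiber_of_mul_lt_card
      (f := fun i : Fin m => ((fun t u => (fA i t u).1, fun t u => (fB i t u).1) :
        (Fin p → Fin r → Fin k) × (Fin q → Fin r → Fin k))) (n := Rt)
      (by rw [Fintype.card_fin, ← hK]; omega)
    obtain ⟨T, hTsub, hTcard⟩ := Finset.exists_subset_card_eq hy.le
    set e0 := T.orderEmbOfFin hTcard with he0
    have he0y : ∀ i, ((fun t u => (fA (e0 i) t u).1, fun t u => (fB (e0 i) t u).1) :
        (Fin p → Fin r → Fin k) × (Fin q → Fin r → Fin k)) = y := by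
      intro i
      have := hTsub (Finset.orderEmbOfFin_mem T hTcard i)
      simpa using this
    have he0yA : ∀ i t u, (fA (e0 i) t u).1 = y.1 t u := by
      intro i t u
      have := congrArg Prod.fst (he0y i)
      exact congrFun (congrFun this t) u
    have he0yB : ∀ i t u, (fB (e0 i) t u).1 = y.2 t u := by
      intro i t u
      have := congrArg Prod.snd (he0y i)
      exact congrFun (congrFun this t) u
    -- the common factor pattern of the slots
    set σ₀ : Fin M₀ → Fin k := fun v =>
      Sum.elim (fun t => y.1 t (MainGlue.uIdx' wl v hr0))
        (fun t => y.2 t (MainGlue.uIdx' wl v hr0)) (wl.get (MainGlue.cIdx wl v hr0)).1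
      with hσ₀
    -- slot arrays
    set X : Fin m → Fin m → Fin M₀ → Σ s : Fin k, G s :=
      fun α β => MainGlue.xArr wl (fA α) (fB β) with hX
    have hXfst : ∀ (i j : Fin Rt) (v : Fin M₀), (X (e0 i) (e0 j) v).1 = σ₀ v := by
      intro i j v
      rw [show X (e0 i) (e0 j) v = _ from
        MainGlue.xArr_eq wl (fA (e0 i)) (fB (e0 j)) hr0 v]
      simp only [hσ₀]
      rcases hzb : (wl.get (MainGlue.cIdx wl v hr0)) with ⟨z, bb⟩
      cases bb <;> cases z <;>
        simp [MainGlue.sigInv, he0yA, he0yB]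
    -- the word value as a slot product
    have hliftw : ∀ (f : (Fin p ⊕ Fin q) → CoprodI G), FreeGroup.lift f w =
        (wl.map fun zb => cond zb.2 (f zb.1) (f zb.1)⁻¹).prod := by
      intro f
      conv_lhs => rw [← FreeGroup.mk_toWord (x := w)]
      rw [FreeGroup.lift_mk]
    have hprod : ∀ α β, FreeGroup.lift (Sum.elim (a α) (b β)) w =
        FPNF.prodList (X α β) (List.finRange M₀) := by
      intro α β
      rw [hliftw, hX]
      rw [show FPNF.prodList (MainGlue.xArr wl (fA α) (fB β)) (List.finRange M₀) = _ from
        MainGlue.prodList_xArr wl (fA α) (fB β)]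
      rw [MainGlue.prod_Xlist wl (fA α) (fB β) (a α) (b β) (hfA α) (hfB β)]
    have hcore : ∀ (i j : Fin Rt),
        (FreeGroup.lift (Sum.elim (a (e0 i)) (b (e0 j))) w = 1 ↔
          FPNF.run σ₀ (FPNF.tauOf (X (e0 i) (e0 j))) (List.finRange M₀) = []) := by
      intro i j
      rw [hprod]
      exact FPNF.core (X (e0 i) (e0 j)) σ₀ (hXfst i j)
    -- Ramsey
    obtain ⟨g, c, hgmono, hc⟩ := hRt
      (fun i j => (FPNF.tauOf (X (e0 i) (e0 j)), FPNF.tauOf (X (e0 j) (e0 i))))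
    have hEc : ∀ i j : Fin (2 * B + 4), i < j →
        FPNF.tauOf (X (e0 (g i)) (e0 (g j))) = c.1 ∧
        FPNF.tauOf (X (e0 (g j)) (e0 (g i))) = c.2 := by
      intro i j hij
      exact ⟨congrArg Prod.fst (hc i j hij), congrArg Prod.snd (hc i j hij)⟩
    have h01 : (⟨0, by omega⟩ : Fin (2 * B + 4)) < ⟨1, by omega⟩ := by
      simp [Fin.lt_def]
    have hrun1 : FPNF.run σ₀ c.1 (List.finRange M₀) = [] := by
      rw [← (hEc _ _ h01).1]
      refine (hcore _ _).1 ((hlad _ _).2 (le_of_lt ?_))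
      exact (T.orderEmbOfFin hTcard).strictMono (hgmono h01)
    have hrun2 : FPNF.run σ₀ c.2 (List.finRange M₀) ≠ [] := by
      rw [← (hEc _ _ h01).2]
      intro hr2
      have h1 := (hcore (g ⟨1, by omega⟩) (g ⟨0, by omega⟩)).2 hr2
      have h2 := (hlad _ _).1 h1
      exact absurd h2 (not_le.2 ((T.orderEmbOfFin hTcard).strictMono (hgmono h01)))
    have hc12 : c.1 ≠ c.2 := fun h => hrun2 (by rw [← h]; exact hrun1)
    obtain ⟨A, hAne⟩ := Function.ne_iff.1 hc12
    -- the differing atom must be single-factor and nonempty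
    by_cases hcst : ∀ u ∈ A, ∀ u' ∈ A, σ₀ u = σ₀ u'
    swap
    · refine absurd ?_ hAne
      have hf1 : c.1 A = false := by
        rw [← (hEc _ _ h01).1]
        apply FPNF.tau_eq_false
        rintro ⟨h1, -⟩
        exact hcst (fun u hu u' hu' => by
          rw [← hXfst (g ⟨0, by omega⟩) (g ⟨1, by omega⟩) u,
            ← hXfst (g ⟨0, by omega⟩) (g ⟨1, by omega⟩) u', h1 u hu u' hu'])
      have hf2 : c.2 A = false := by
        rw [← (hEc _ _ h01).2]
        apply FPNF.tau_eq_false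
        rintro ⟨h1, -⟩
        exact hcst (fun u hu u' hu' => by
          rw [← hXfst (g ⟨1, by omega⟩) (g ⟨0, by omega⟩) u,
            ← hXfst (g ⟨1, by omega⟩) (g ⟨0, by omega⟩) u', h1 u hu u' hu'])
      rw [hf1, hf2]
    rcases Finset.eq_empty_or_nonempty A with rfl | hAnonempty
    · refine absurd ?_ hAne
      have htrue : ∀ α β, FPNF.tauOf (X α β) ∅ = true := by
        intro α β
        exact (FPNF.tau_iff (X α β) (by simp)).2
          (by simp [FPNF.prodA, FPNF.prodList, Finset.sort_empty])
      rw [← (hEc _ _ h01).1, ← (hEc _ _ h01).2, htrue, htrue]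
    obtain ⟨v₀, hv₀⟩ := hAnonempty
    set s := σ₀ v₀ with hs
    have hAs : ∀ v ∈ A, σ₀ v = s := fun v hv => hcst v hv v₀ hv₀
    -- transfer: the atom as a qf equation in the factor G s
    have htrans : ∀ i j : Fin Rt,
        (FreeGroup.lift (Sum.elim (MainGlue.aTup (fA (e0 i)) s) (MainGlue.bTup (fB (e0 j)) s))
            (MainGlue.wordW wl hr0 A) = 1 ↔ FPNF.tauOf (X (e0 i) (e0 j)) A = true) := by
      intro i j
      rw [MainGlue.lift_wordW wl (fA (e0 i)) (fB (e0 j)) hr0 s A]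
      have hσA : ∀ u ∈ A.sort (· ≤ ·), (X (e0 i) (e0 j) u).1 = s := fun u hu => by
        rw [hXfst i j u]
        exact hAs u ((Finset.mem_sort _).1 hu)
      have hofgv := FPNF.of_gv (X (e0 i) (e0 j)) s (A.sort (· ≤ ·)) hσA
      have hfstA : ∀ u ∈ A, ∀ u' ∈ A, (X (e0 i) (e0 j) u).1 = (X (e0 i) (e0 j) u').1 :=
        fun u hu u' hu' => by
          rw [hXfst i j u, hXfst i j u', hAs u hu, hAs u' hu']
      rw [FPNF.tau_iff _ hfstA]
      constructor
      · intro h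
        show FPNF.prodList (X (e0 i) (e0 j)) (A.sort (· ≤ ·)) = 1
        rw [← hofgv]
        have h' : FPNF.gv (X (e0 i) (e0 j)) s (A.sort (· ≤ ·)) = 1 := h
        rw [h', map_one]
      · intro h
        have h' : CoprodI.of (FPNF.gv (X (e0 i) (e0 j)) s (A.sort (· ≤ ·)))
            = CoprodI.of (1 : G s) := by
          rw [map_one, hofgv]
          exact h
        exact Monoid.CoprodI.of_injective s h'
    -- the qf-stability bound for this atom
    have hnAspec := Classical.choose_spec (hG s (p * r) (q * r) (MainGlue.wordW wl hr0 A))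
    have hnA_le_B : Classical.choose (hG s (p * r) (q * r) (MainGlue.wordW wl hr0 A)) ≤ B :=
      Finset.le_sup (f := nOf) (Finset.mem_univ (s, A))
    cases hc1v : c.1 A with
    | true =>
      have hc2v : c.2 A = false := by
        cases h2 : c.2 A
        · rfl
        · exact absurd (hc1v.trans h2.symm) hAne
      have hladder : ∀ i j : Fin (B + 2),
          FreeGroup.lift (Sum.elim
            (MainGlue.aTup (fA (e0 (g ⟨2 * i.1, by omega⟩))) s)
            (MainGlue.bTup (fB (e0 (g ⟨2 * j.1 + 1, by omega⟩))) s))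
            (MainGlue.wordW wl hr0 A) = 1 ↔ i ≤ j := by
        intro i j
        rw [htrans]
        constructor
        · intro h
          by_contra hij
          push_neg at hij
          have hlt : (⟨2 * j.1 + 1, by omega⟩ : Fin (2 * B + 4)) < ⟨2 * i.1, by omega⟩ := by
            rw [Fin.mk_lt_mk]
            have := Fin.lt_def.1 hij
            omega
          rw [(hEc _ _ hlt).2, hc2v] at h
          exact Bool.false_ne_true h
        · intro hij
          have hlt : (⟨2 * i.1, by omega⟩ : Fin (2 * B + 4)) < ⟨2 * j.1 + 1, by omega⟩ := by
            rw [Fin.mk_lt_mk]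
            have := Fin.le_def.1 hij
            omega
          rw [(hEc _ _ hlt).1, hc1v]
      have hle := hnAspec (B + 2) ⟨_, _, hladder⟩
      omega
    | false =>
      have hc2v : c.2 A = true := by
        cases h2 : c.2 A
        · exact absurd (hc1v.trans h2.symm) hAne
        · rfl
      have hladder : ∀ i j : Fin (B + 2),
          FreeGroup.lift (Sum.elim
            (MainGlue.aTup (fA (e0 (g ⟨2 * (B + 1 - i.1) + 1, by omega⟩))) s)
            (MainGlue.bTup (fB (e0 (g ⟨2 * (B + 1 - j.1), by omega⟩))) s))
            (MainGlue.wordW wl hr0 A) = 1 ↔ i ≤ j := by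
        intro i j
        rw [htrans]
        constructor
        · intro h
          by_contra hij
          push_neg at hij
          have hlt : (⟨2 * (B + 1 - i.1) + 1, by omega⟩ : Fin (2 * B + 4)) <
              ⟨2 * (B + 1 - j.1), by omega⟩ := by
            rw [Fin.mk_lt_mk]
            have := Fin.lt_def.1 hij
            have hi2 := i.2
            have hj2 := j.2
            omega
          rw [(hEc _ _ hlt).1, hc1v] at h
          exact Bool.false_ne_true h
        · intro hij
          have hlt : (⟨2 * (B + 1 - j.1), by omega⟩ : Fin (2 * B + 4)) <
              ⟨2 * (B + 1 - i.1) + 1, by omega⟩ := by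
            rw [Fin.mk_lt_mk]
            have := Fin.le_def.1 hij
            have hi2 := i.2
            have hj2 := j.2
            omega
          rw [(hEc _ _ hlt).2, hc2v]
      have hle := hnAspec (B + 2) ⟨_, _, hladder⟩
      omega
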